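/- For the instance with exactly 2 agents and 4 goods in which both agents have the identical binary additive true valuation v with v(g_1) = 0 and v(g_2) = v(g_3) = v(g_4) = 1, Standard-E-C-E has no pure Nash equilibrium: for every bid profile (b_1, b_2) there is an agent i and an alternative bid b'_i such that agent i's true value for her bundle under (b'_i, b_{-i}) is strictly greater than under (b_1, b_2). -/

import Mathlib

/-!
Formalization of the strategic Envy-Cycle-Elimination (E-C-E) setting.

There are `n` agents and `m` goods (`Fin m`), with the predefined ordering of agents
and goods given by the orders on `Fin n` and `Fin m`.  A bid consists of a reported
additive valuation (a nonnegative value for every good) together with a preference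
list (a permutation of the goods).  E-C-E starts from empty bundles and, while
unallocated goods remain, selects a source of the envy graph (according to the rule of
the respective variant), adds one unallocated good to that agent's bundle (again
according to the rule of the respective variant), and then repeatedly eliminates envy
cycles, in a fixed order, until the envy graph has a source.
-/

open scoped Classical
open Finset

/-- A bid of an agent: a reported additive valuation (a nonnegative value for every
good) together with a preference list, a permutation of the goods. -/
structure Bid (m : ℕ) where
  val : Fin m → ℝ
  nonneg : ∀ g, 0 ≤ val g
  pref : Equiv.Perm (Fin m)

namespace ECE

variable {n m : ℕ}

/-- Reported (additive) value of a bundle. -/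
noncomputable def bval (b : Bid m) (S : Finset (Fin m)) : ℝ := ∑ g ∈ S, b.val g

/-- (True, additive) value of a bundle under the valuation `v`. -/
noncomputable def value (v : Fin m → ℝ) (S : Finset (Fin m)) : ℝ := ∑ g ∈ S, v g

/-- Envy-graph edge: agent `i` envies agent `j` (w.r.t. the reported valuations) under
the partial allocation `P`. -/
def envies (b : Fin n → Bid m) (P : Fin n → Finset (Fin m)) (i j : Fin n) : Prop :=
  bval (b i) (P i) < bval (b i) (P j)

/-- The sources (vertices of in-degree 0) of the envy graph. -/
noncomputable def sources (b : Fin n → Bid m) (P : Fin n → Finset (Fin m)) :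
    Finset (Fin n) :=
  univ.filter fun i => ∀ j, ¬ envies b P j i

/-- The envy cycles of the current envy graph, represented as cyclic permutations `σ`
of the agents such that every agent moved by `σ` envies her image under `σ`. -/
noncomputable def cycleSet (b : Fin n → Bid m) (P : Fin n → Finset (Fin m)) :
    Finset (Equiv.Perm (Fin n)) :=
  univ.filter fun σ => σ.IsCycle ∧ ∀ i, σ i ≠ i → envies b P i (σ i)

/-- A fixed enumeration of the permutations of the agents, providing the fixed
(lexicographic) order in which envy cycles are eliminated. -/
noncomputable def permIdx (n : ℕ) :
    Equiv.Perm (Fin n) ≃ Fin (Fintype.card (Equiv.Perm (Fin n))) :=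
  Fintype.equivFin _

/-- Eliminate one envy cycle (the first one in the fixed order): every agent on the
cycle receives the bundle of the agent she envies. -/
noncomputable def elimOnce (b : Fin n → Bid m) (P : Fin n → Finset (Fin m)) :
    Fin n → Finset (Fin m) :=
  if h : (cycleSet b P).Nonempty then
    let σ := (permIdx n).symm (((cycleSet b P).image (permIdx n)).min' (h.image _))
    fun i => P (σ i)
  else P

/-- Repeatedly eliminate envy cycles until the envy graph has a source. -/
noncomputable def resolve (b : Fin n → Bid m) :
    ℕ → (Fin n → Finset (Fin m)) → Fin n → Finset (Fin m)
  | 0, P => P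
  | fuel + 1, P => if (sources b P).Nonempty then P else resolve b fuel (elimOnce b P)

/-- The state (current partial allocation, remaining unallocated goods) of an E-C-E
run after a given number of steps.  In each step, if unallocated goods remain, the
agent chosen by `pickAgent` (a source of the envy graph) receives the good chosen by
`pickItem`, and afterwards envy cycles are eliminated until the graph has a source. -/
noncomputable def stateECE (b : Fin n → Bid m)
    (pickAgent : (Fin n → Finset (Fin m)) → Option (Fin n))
    (pickItem : Fin n → (R : Finset (Fin m)) → R.Nonempty → Fin m) :
    ℕ → (Fin n → Finset (Fin m)) × Finset (Fin m)
  | 0 => (fun _ => ∅, univ)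
  | k + 1 =>
    let s := stateECE b pickAgent pickItem k
    if hR : s.2.Nonempty then
      match pickAgent s.1 with
      | none => s
      | some i =>
        let g := pickItem i s.2 hR
        (resolve b (n * n + 1) (fun j => if j = i then insert g (s.1 j) else s.1 j),
          s.2.erase g)
    else s

/-- Source selection of Standard-E-C-E: among multiple sources, the agent earliest in
the predefined ordering of the agents. -/
noncomputable def stdAgent (b : Fin n → Bid m) (P : Fin n → Finset (Fin m)) :
    Option (Fin n) :=
  if h : (sources b P).Nonempty then some ((sources b P).min' h) else none

/-- Source selection of the Priority variants: among multiple sources, those having at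
least one outgoing envy edge have priority, ties broken by the predefined ordering of
the agents. -/
noncomputable def priAgent (b : Fin n → Bid m) (P : Fin n → Finset (Fin m)) :
    Option (Fin n) :=
  if h' : ((sources b P).filter fun i => ∃ j, envies b P i j).Nonempty then
    some (((sources b P).filter fun i => ∃ j, envies b P i j).min' h')
  else if h : (sources b P).Nonempty then some ((sources b P).min' h) else none

/-- The unallocated good of highest reported value, ties broken by the predefined
ordering of the goods. -/
noncomputable def bestItem (v : Fin m → ℝ) (R : Finset (Fin m)) (hR : R.Nonempty) :
    Fin m :=
  (R.filter fun g => ∀ g' ∈ R, v g' ≤ v g).min' (by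
    obtain ⟨g, hg, hmax⟩ := R.exists_max_image v hR
    exact ⟨g, mem_filter.2 ⟨hg, hmax⟩⟩)

/-- The earliest unallocated good in the preference list `pref`. -/
noncomputable def preferredItem (pref : Equiv.Perm (Fin m)) (R : Finset (Fin m))
    (hR : R.Nonempty) : Fin m :=
  pref.symm ((R.image pref).min' (hR.image _))

/-- Standard-E-C-E: sources chosen by the predefined agent ordering, goods assigned in
the predefined ordering of the goods. -/
noncomputable def Standard (b : Fin n → Bid m) : Fin n → Finset (Fin m) :=
  (stateECE b (stdAgent b) (fun _ R hR => R.min' hR) m).1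

/-- Priority-E-C-E: envious sources have priority (ties broken by the agent ordering),
goods assigned in the predefined ordering of the goods. -/
noncomputable def Priority (b : Fin n → Bid m) : Fin n → Finset (Fin m) :=
  (stateECE b (priAgent b) (fun _ R hR => R.min' hR) m).1

/-- Best-Item-E-C-E: envious sources have priority, and the chosen agent receives her
unallocated good of highest reported value (ties broken by the good ordering). -/
noncomputable def BestItemECE (b : Fin n → Bid m) : Fin n → Finset (Fin m) :=
  (stateECE b (priAgent b) (fun i R hR => bestItem (b i).val R hR) m).1

/-- Preferred-Item-E-C-E: envious sources have priority, and the chosen agent receives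
the earliest unallocated good in her preference list. -/
noncomputable def PreferredItemECE (b : Fin n → Bid m) : Fin n → Finset (Fin m) :=
  (stateECE b (priAgent b) (fun i R hR => preferredItem (b i).pref R hR) m).1

/-- The allocation `A` is `α`-EF1 from agent `i`'s perspective w.r.t. the valuation
`v`: for every agent `j` with nonempty bundle there is a good `g ∈ A j` with
`v (A i) ≥ α · v (A j \ {g})`. -/
def EF1From (α : ℝ) (v : Fin m → ℝ) (A : Fin n → Finset (Fin m)) (i : Fin n) : Prop :=
  ∀ j : Fin n, (A j).Nonempty → ∃ g ∈ A j, α * value v ((A j).erase g) ≤ value v (A i)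

/-- The allocation `A` is EF1 w.r.t. the valuations `v`. -/
def IsEF1 (v : Fin n → Fin m → ℝ) (A : Fin n → Finset (Fin m)) : Prop :=
  ∀ i : Fin n, EF1From 1 (v i) A i

/-- Agent `i`'s bid in the profile `b` is a best response to the others' bids, w.r.t.
her true (additive) valuation `v`: no alternative bid gives her a bundle of strictly
larger true value. -/
def BestResponse (Mech : (Fin n → Bid m) → Fin n → Finset (Fin m))
    (v : Fin m → ℝ) (b : Fin n → Bid m) (i : Fin n) : Prop :=
  ∀ b' : Bid m, value v (Mech (Function.update b i b') i) ≤ value v (Mech b i)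

/-- The bid profile `b` is a pure Nash equilibrium of the mechanism `Mech` w.r.t. the
true (additive) valuations `v`. -/
def IsPNE (Mech : (Fin n → Bid m) → Fin n → Finset (Fin m))
    (v : Fin n → Fin m → ℝ) (b : Fin n → Bid m) : Prop :=
  ∀ i : Fin n, BestResponse Mech (v i) b i

end ECE

open ECE
namespace ECE

lemma bval_nonneg (b : Bid 4) (S : Finset (Fin 4)) : 0 ≤ bval b S :=
  Finset.sum_nonneg fun g _ => b.nonneg g

@[simp] lemma bval_empty (b : Bid 4) : bval b (∅ : Finset (Fin 4)) = 0 :=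
  Finset.sum_empty

lemma not_envies_self (b : Fin 2 → Bid 4) (P : Fin 2 → Finset (Fin 4)) (i : Fin 2) :
    ¬ envies b P i i := lt_irrefl _

lemma fin2 (i : Fin 2) : i = 0 ∨ i = 1 := by omega

lemma perm_fin2 (σ : Equiv.Perm (Fin 2)) : σ = 1 ∨ σ = Equiv.swap 0 1 := by
  revert σ; decide

lemma mem_sources (b : Fin 2 → Bid 4) (P : Fin 2 → Finset (Fin 4)) (i : Fin 2) :
    i ∈ sources b P ↔ ∀ j, ¬ envies b P j i := by
  simp [sources]

lemma stdAgent_eq_zero (b : Fin 2 → Bid 4) (P : Fin 2 → Finset (Fin 4))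
    (h : ¬ envies b P 1 0) : stdAgent b P = some 0 := by
  have h0 : (0 : Fin 2) ∈ sources b P := by
    rw [mem_sources]; intro j
    rcases fin2 j with rfl | rfl
    · exact not_envies_self b P 0
    · exact h
  have hne : (sources b P).Nonempty := ⟨0, h0⟩
  rw [stdAgent, dif_pos hne]
  exact congrArg some (le_antisymm (Finset.min'_le _ _ h0) (Fin.zero_le _))

lemma stdAgent_eq_one (b : Fin 2 → Bid 4) (P : Fin 2 → Finset (Fin 4))
    (h : envies b P 1 0) (h' : ¬ envies b P 0 1) : stdAgent b P = some 1 := by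
  have h1 : (1 : Fin 2) ∈ sources b P := by
    rw [mem_sources]; intro j
    rcases fin2 j with rfl | rfl
    · exact h'
    · exact not_envies_self b P 1
  have h0 : (0 : Fin 2) ∉ sources b P := by
    rw [mem_sources]; push_neg; exact ⟨1, h⟩
  have hne : (sources b P).Nonempty := ⟨1, h1⟩
  rw [stdAgent, dif_pos hne]
  refine congrArg some ?_
  have := Finset.min'_mem (sources b P) hne
  rcases fin2 ((sources b P).min' hne) with he | he
  · rw [he] at this; exact absurd this h0
  · exact he

lemma sources_nonempty (b : Fin 2 → Bid 4) (P : Fin 2 → Finset (Fin 4))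
    (h : ¬ (envies b P 0 1 ∧ envies b P 1 0)) : (sources b P).Nonempty := by
  by_cases h10 : envies b P 1 0
  · refine ⟨1, ?_⟩
    rw [mem_sources]; intro j
    rcases fin2 j with rfl | rfl
    · exact fun h01 => h ⟨h01, h10⟩
    · exact not_envies_self b P 1
  · refine ⟨0, ?_⟩
    rw [mem_sources]; intro j
    rcases fin2 j with rfl | rfl
    · exact not_envies_self b P 0
    · exact h10

lemma resolve_noswap (b : Fin 2 → Bid 4) (P : Fin 2 → Finset (Fin 4)) (fuel : ℕ)
    (h : ¬ (envies b P 0 1 ∧ envies b P 1 0)) : resolve b (fuel + 1) P = P := by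
  rw [resolve, if_pos (sources_nonempty b P h)]

lemma cycleSet_eq (b : Fin 2 → Bid 4) (P : Fin 2 → Finset (Fin 4))
    (h1 : envies b P 0 1) (h2 : envies b P 1 0) :
    cycleSet b P = {Equiv.swap 0 1} := by
  ext σ
  simp only [cycleSet, Finset.mem_filter, Finset.mem_univ, true_and,
    Finset.mem_singleton]
  constructor
  · rintro ⟨hc, -⟩
    rcases perm_fin2 σ with rfl | rfl
    · exact absurd rfl hc.ne_one
    · rfl
  · rintro rfl
    refine ⟨Equiv.Perm.isCycle_swap (by decide), fun i _ => ?_⟩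
    rcases fin2 i with rfl | rfl
    · simpa using h1
    · simpa using h2

lemma resolve_swap (b : Fin 2 → Bid 4) (P : Fin 2 → Finset (Fin 4)) (fuel : ℕ)
    (h1 : envies b P 0 1) (h2 : envies b P 1 0) :
    resolve b (fuel + 2) P = ![P 1, P 0] := by
  have hsrc : sources b P = ∅ := by
    rw [Finset.eq_empty_iff_forall_notMem]
    intro i hi
    rw [mem_sources] at hi
    rcases fin2 i with rfl | rfl
    · exact hi 1 h2
    · exact hi 0 h1
  have hswap : elimOnce b P = fun i => P (Equiv.swap 0 1 i) := by
    have hcs := cycleSet_eq b P h1 h2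
    rw [elimOnce]
    rw [dif_pos (by rw [hcs]; exact ⟨_, Finset.mem_singleton_self _⟩)]
    simp only [hcs, Finset.image_singleton, Finset.min'_singleton,
      Equiv.symm_apply_apply]
  have hP' : (fun i => P (Equiv.swap 0 1 i)) = ![P 1, P 0] := by
    funext i
    rcases fin2 i with rfl | rfl <;> simp
  rw [show fuel + 2 = (fuel + 1) + 1 from rfl, resolve]
  rw [if_neg (by rw [hsrc]; simp), hswap, hP']
  apply resolve_noswap
  rintro ⟨e1, e2⟩
  simp only [envies] at e1 e2 h1 h2
  simp at e1 e2
  exact absurd h1 (not_lt.2 e1.le)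

end ECE
namespace ECE

@[simp] lemma bval_insert (b : Bid 4) {g : Fin 4} {S : Finset (Fin 4)} (h : g ∉ S) :
    bval b (insert g S) = b.val g + bval b S := Finset.sum_insert h

@[simp] lemma bval_singleton (b : Bid 4) (g : Fin 4) : bval b {g} = b.val g :=
  Finset.sum_singleton _ _

/-- One step of `stateECE`, in clean form. -/
lemma stateECE_succ (b : Fin 2 → Bid 4) (pA : (Fin 2 → Finset (Fin 4)) → Option (Fin 2))
    (pI : Fin 2 → (R : Finset (Fin 4)) → R.Nonempty → Fin 4)
    (k : ℕ) (P : Fin 2 → Finset (Fin 4)) (R : Finset (Fin 4))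
    (hk : stateECE b pA pI k = (P, R)) (hR : R.Nonempty) (i : Fin 2)
    (hi : pA P = some i) :
    stateECE b pA pI (k+1) =
      (resolve b 5 (fun j => if j = i then insert (pI i R hR) (P j) else P j),
        R.erase (pI i R hR)) := by
  rw [stateECE, hk]
  simp only [hi, dif_pos hR]

lemma min'_univ (h : (Finset.univ : Finset (Fin 4)).Nonempty) :
    Finset.univ.min' h = 0 :=
  le_antisymm (Finset.min'_le _ _ (by decide)) (Fin.zero_le _)

lemma min'_123 (h : ({1,2,3} : Finset (Fin 4)).Nonempty) : Finset.min' _ h = 1 :=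
  le_antisymm (Finset.min'_le _ _ (by decide)) (Finset.le_min' _ _ _ (by decide))

lemma min'_23 (h : ({2,3} : Finset (Fin 4)).Nonempty) : Finset.min' _ h = 2 :=
  le_antisymm (Finset.min'_le _ _ (by decide)) (Finset.le_min' _ _ _ (by decide))

lemma min'_3 (h : ({3} : Finset (Fin 4)).Nonempty) : Finset.min' _ h = 3 :=
  Finset.min'_singleton _

/-- After the first step of Standard-E-C-E, agent 0 holds good 0. -/
lemma state1 (b : Fin 2 → Bid 4) :
    stateECE b (stdAgent b) (fun _ R hR => R.min' hR) 1 = (![{0}, ∅], {1,2,3}) := by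
  have h0 : stateECE b (stdAgent b) (fun _ R hR => R.min' hR) 0
      = (fun _ => (∅ : Finset (Fin 4)), Finset.univ) := rfl
  have hne : (Finset.univ : Finset (Fin 4)).Nonempty := ⟨0, Finset.mem_univ 0⟩
  rw [stateECE_succ b _ _ 0 _ _ h0 hne 0
    (stdAgent_eq_zero b _ (by simp [envies]))]
  rw [min'_univ]
  have hP : (fun j => if j = (0:Fin 2) then insert (0:Fin 4) ((fun _ => ∅) j)
      else (fun _ => (∅ : Finset (Fin 4))) j) = ![{0}, ∅] := by
    funext j; rcases fin2 j with rfl | rfl <;> simp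
  rw [hP, resolve_noswap]
  · norm_num
    decide
  · rintro ⟨e1, -⟩
    simp only [envies] at e1
    simp at e1
    exact absurd ((b 0).nonneg 0) (not_le.2 e1)

end ECE
namespace ECE

lemma resolve5_noswap (b : Fin 2 → Bid 4) (P : Fin 2 → Finset (Fin 4))
    (h : ¬ (envies b P 0 1 ∧ envies b P 1 0)) : resolve b 5 P = P :=
  resolve_noswap b P 4 h

lemma resolve5_swap (b : Fin 2 → Bid 4) (P : Fin 2 → Finset (Fin 4))
    (h1 : envies b P 0 1) (h2 : envies b P 1 0) : resolve b 5 P = ![P 1, P 0] :=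
  resolve_swap b P 3 h1 h2

/-- One full round of Standard-E-C-E in which no swap occurs. -/
lemma round_noswap (b : Fin 2 → Bid 4) (k : ℕ) (S0 S1 : Finset (Fin 4))
    (R : Finset (Fin 4))
    (hk : stateECE b (stdAgent b) (fun _ R hR => R.min' hR) k = (![S0, S1], R))
    (hR : R.Nonempty) (i : Fin 2) (hi : stdAgent b ![S0, S1] = some i)
    (g : Fin 4) (hg : R.min' hR = g) (T0 T1 R' : Finset (Fin 4))
    (hT : (fun j => if j = i then insert g (![S0, S1] j) else ![S0, S1] j)
          = ![T0, T1])
    (hns : ¬ (envies b ![T0, T1] 0 1 ∧ envies b ![T0, T1] 1 0))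
    (hR' : R.erase g = R') :
    stateECE b (stdAgent b) (fun _ R hR => R.min' hR) (k+1) = (![T0, T1], R') := by
  rw [stateECE_succ b _ _ k _ _ hk hR i hi]
  simp only [hg, hT, hR']
  rw [resolve5_noswap b _ hns]

/-- One full round of Standard-E-C-E in which the two bundles are swapped. -/
lemma round_swap (b : Fin 2 → Bid 4) (k : ℕ) (S0 S1 : Finset (Fin 4))
    (R : Finset (Fin 4))
    (hk : stateECE b (stdAgent b) (fun _ R hR => R.min' hR) k = (![S0, S1], R))
    (hR : R.Nonempty) (i : Fin 2) (hi : stdAgent b ![S0, S1] = some i)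
    (g : Fin 4) (hg : R.min' hR = g) (T0 T1 R' : Finset (Fin 4))
    (hT : (fun j => if j = i then insert g (![S0, S1] j) else ![S0, S1] j)
          = ![T0, T1])
    (h1 : envies b ![T0, T1] 0 1) (h2 : envies b ![T0, T1] 1 0)
    (hR' : R.erase g = R') :
    stateECE b (stdAgent b) (fun _ R hR => R.min' hR) (k+1) = (![T1, T0], R') := by
  rw [stateECE_succ b _ _ k _ _ hk hR i hi]
  simp only [hg, hT, hR']
  rw [resolve5_swap b _ h1 h2]
  simp

end ECE
namespace ECE

lemma simL1a (b : Fin 2 → Bid 4) (hc : (b 1).val = ![0, 1, 0, 9])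
    (h : (b 0).val 2 ≤ (b 0).val 0 + (b 0).val 1) : Standard b 1 = {2, 3} := by
  have a0 := (b 0).nonneg 0
  have a1 := (b 0).nonneg 1
  have a2 := (b 0).nonneg 2
  have a3 := (b 0).nonneg 3
  have s2 := round_noswap b 1 {0} ∅ {1,2,3} (state1 b) ⟨1, by decide⟩ 0
    (stdAgent_eq_zero _ _ (by simp [envies, hc])) 1 (min'_123 _)
    {0,1} ∅ {2,3}
    (by funext j; rcases fin2 j with rfl | rfl <;> simp <;> decide)
    (by rintro ⟨e1, -⟩; simp [envies] at e1; linarith)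
    (by decide)
  have s3 := round_noswap b 2 {0,1} ∅ {2,3} s2 ⟨2, by decide⟩ 1
    (stdAgent_eq_one _ _ (by simp [envies, hc]) (by simp [envies]; linarith)) 2
    (min'_23 _) {0,1} {2} {3}
    (by funext j; rcases fin2 j with rfl | rfl <;> simp <;> decide)
    (by rintro ⟨e1, -⟩; simp [envies] at e1; linarith)
    (by decide)
  have s4 := round_noswap b 3 {0,1} {2} {3} s3 ⟨3, by decide⟩ 1
    (stdAgent_eq_one _ _ (by simp [envies, hc]) (by simp [envies]; linarith)) 3
    (min'_3 _) {0,1} {2,3} ∅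
    (by funext j; rcases fin2 j with rfl | rfl <;> simp <;> decide)
    (by rintro ⟨-, e2⟩; simp [envies, hc] at e2)
    (by decide)
  rw [Standard, s4]
  simp

end ECE
namespace ECE

/-- The common true valuation in the counterexample instance. -/
noncomputable def vt : Fin 4 → ℝ := fun g => if g = 0 then 0 else 1

@[simp] lemma value_empty (v : Fin 4 → ℝ) : value v (∅ : Finset (Fin 4)) = 0 :=
  Finset.sum_empty

@[simp] lemma value_insert (v : Fin 4 → ℝ) {g : Fin 4} {S : Finset (Fin 4)}
    (h : g ∉ S) : value v (insert g S) = v g + value v S := Finset.sum_insert h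

@[simp] lemma value_singleton (v : Fin 4 → ℝ) (g : Fin 4) : value v {g} = v g :=
  Finset.sum_singleton _ _

lemma simL1b (b : Fin 2 → Bid 4) (hc : (b 1).val = ![1, 1, 9, 9])
    (h : (b 0).val 0 + (b 0).val 1 < (b 0).val 2) : Standard b 1 = {1, 3} := by
  have a0 := (b 0).nonneg 0
  have a1 := (b 0).nonneg 1
  have a2 := (b 0).nonneg 2
  have a3 := (b 0).nonneg 3
  have s2 := round_noswap b 1 {0} ∅ {1,2,3} (state1 b) ⟨1, by decide⟩ 1
    (stdAgent_eq_one _ _ (by simp [envies, hc] <;> norm_num) (by simp [envies]; linarith))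
    1 (min'_123 _) {0} {1} {2,3}
    (by funext j; rcases fin2 j with rfl | rfl <;> simp <;> decide)
    (by rintro ⟨-, e2⟩; simp [envies, hc] at e2 <;> linarith)
    (by decide)
  have s3 := round_noswap b 2 {0} {1} {2,3} s2 ⟨2, by decide⟩ 0
    (stdAgent_eq_zero _ _ (by simp [envies, hc] <;> norm_num)) 2
    (min'_23 _) {0,2} {1} {3}
    (by funext j; rcases fin2 j with rfl | rfl <;> simp <;> decide)
    (by rintro ⟨e1, -⟩; simp [envies] at e1; linarith)
    (by decide)
  have s4 := round_noswap b 3 {0,2} {1} {3} s3 ⟨3, by decide⟩ 1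
    (stdAgent_eq_one _ _ (by simp [envies, hc] <;> norm_num) (by simp [envies]; linarith)) 3
    (min'_3 _) {0,2} {1,3} ∅
    (by funext j; rcases fin2 j with rfl | rfl <;> simp <;> decide)
    (by rintro ⟨-, e2⟩; simp [envies, hc] at e2 <;> linarith)
    (by decide)
  rw [Standard, s4]
  simp

lemma simL0a (b : Fin 2 → Bid 4) (ha : (b 0).val = ![0, 0, 9, 9])
    (hc : (b 1).val 0 ≤ 0) : 2 ≤ value vt (Standard b 0) := by
  have c0 := (b 1).nonneg 0
  have c1 := (b 1).nonneg 1
  have c2 := (b 1).nonneg 2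
  have c3 := (b 1).nonneg 3
  have hc0 : (b 1).val 0 = 0 := le_antisymm hc c0
  have s2 := round_noswap b 1 {0} ∅ {1,2,3} (state1 b) ⟨1, by decide⟩ 0
    (stdAgent_eq_zero _ _ (by simp [envies, hc0])) 1 (min'_123 _)
    {0,1} ∅ {2,3}
    (by funext j; rcases fin2 j with rfl | rfl <;> simp <;> decide)
    (by rintro ⟨e1, -⟩; simp [envies, ha] at e1 <;> linarith)
    (by decide)
  by_cases h1 : (b 1).val 1 ≤ 0
  · -- branch A : agent 0 also takes good 2
    have hc1 : (b 1).val 1 = 0 := le_antisymm h1 c1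
    have s3 := round_noswap b 2 {0,1} ∅ {2,3} s2 ⟨2, by decide⟩ 0
      (stdAgent_eq_zero _ _ (by simp [envies, hc0, hc1])) 2 (min'_23 _)
      {0,1,2} ∅ {3}
      (by funext j; rcases fin2 j with rfl | rfl <;> simp <;> decide)
      (by rintro ⟨e1, -⟩; simp [envies, ha] at e1 <;> linarith)
      (by decide)
    by_cases h2 : (b 1).val 2 ≤ 0
    · have hc2 : (b 1).val 2 = 0 := le_antisymm h2 c2
      have s4 := round_noswap b 3 {0,1,2} ∅ {3} s3 ⟨3, by decide⟩ 0
        (stdAgent_eq_zero _ _ (by simp [envies, hc0, hc1, hc2])) 3 (min'_3 _)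
        {0,1,2,3} ∅ ∅
        (by funext j; rcases fin2 j with rfl | rfl <;> simp <;> decide)
        (by rintro ⟨e1, -⟩; simp [envies, ha] at e1 <;> linarith)
        (by decide)
      rw [Standard, s4]
      simp [vt] <;> norm_num
    · have s4 := round_noswap b 3 {0,1,2} ∅ {3} s3 ⟨3, by decide⟩ 1
        (stdAgent_eq_one _ _ (by simp [envies]; linarith)
          (by simp [envies, ha] <;> norm_num)) 3 (min'_3 _)
        {0,1,2} {3} ∅
        (by funext j; rcases fin2 j with rfl | rfl <;> simp <;> decide)
        (by rintro ⟨e1, -⟩; simp [envies, ha] at e1 <;> linarith)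
        (by decide)
      rw [Standard, s4]
      simp [vt] <;> norm_num
  · -- branch B : agent 1 takes good 2
    have s3pre := stdAgent_eq_one b ![{0,1}, ∅]
      (by simp [envies]; linarith) (by simp [envies, ha])
    by_cases hcc : (b 1).val 2 < (b 1).val 0 + (b 1).val 1
    · -- swap happens
      have s3 := round_swap b 2 {0,1} ∅ {2,3} s2 ⟨2, by decide⟩ 1 s3pre 2
        (min'_23 _) {0,1} {2} {3}
        (by funext j; rcases fin2 j with rfl | rfl <;> simp <;> decide)
        (by simp [envies, ha] <;> norm_num) (by simp [envies]; linarith)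
        (by decide)
      have s4 := round_noswap b 3 {2} {0,1} {3} s3 ⟨3, by decide⟩ 0
        (stdAgent_eq_zero _ _ (by simp [envies]; linarith)) 3 (min'_3 _)
        {2,3} {0,1} ∅
        (by funext j; rcases fin2 j with rfl | rfl <;> simp <;> decide)
        (by rintro ⟨e1, -⟩; simp [envies, ha] at e1 <;> linarith)
        (by decide)
      rw [Standard, s4]
      simp [vt] <;> norm_num
    · -- no swap
      have s3 := round_noswap b 2 {0,1} ∅ {2,3} s2 ⟨2, by decide⟩ 1 s3pre 2
        (min'_23 _) {0,1} {2} {3}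
        (by funext j; rcases fin2 j with rfl | rfl <;> simp <;> decide)
        (by rintro ⟨-, e2⟩; simp [envies] at e2; exact hcc (by linarith))
        (by decide)
      have s4 := round_noswap b 3 {0,1} {2} {3} s3 ⟨3, by decide⟩ 0
        (stdAgent_eq_zero _ _ (by simp [envies]; linarith)) 3 (min'_3 _)
        {0,1,3} {2} ∅
        (by funext j; rcases fin2 j with rfl | rfl <;> simp <;> decide)
        (by rintro ⟨e1, -⟩; simp [envies, ha] at e1 <;> linarith)
        (by decide)
      rw [Standard, s4]
      simp [vt] <;> norm_num

lemma simL0b (b : Fin 2 → Bid 4) (ha : (b 0).val = ![0, 1, 1, 0])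
    (h0 : 0 < (b 1).val 0) (h1 : (b 1).val 1 < (b 1).val 0) :
    2 ≤ value vt (Standard b 0) := by
  have s2 := round_swap b 1 {0} ∅ {1,2,3} (state1 b) ⟨1, by decide⟩ 1
    (stdAgent_eq_one _ _ (by simp [envies]; linarith) (by simp [envies, ha] <;> norm_num))
    1 (min'_123 _) {0} {1}  {2,3}
    (by funext j; rcases fin2 j with rfl | rfl <;> simp <;> decide)
    (by simp [envies, ha] <;> norm_num) (by simp [envies]; linarith)
    (by decide)
  have s3 := round_noswap b 2 {1} {0} {2,3} s2 ⟨2, by decide⟩ 0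
    (stdAgent_eq_zero _ _ (by simp [envies]; linarith)) 2 (min'_23 _)
    {1,2} {0} {3}
    (by funext j; rcases fin2 j with rfl | rfl <;> simp <;> decide)
    (by rintro ⟨e1, -⟩; simp [envies, ha] at e1 <;> linarith)
    (by decide)
  by_cases hcc : (b 1).val 0 < (b 1).val 1 + (b 1).val 2
  · have s4 := round_noswap b 3 {1,2} {0} {3} s3 ⟨3, by decide⟩ 1
      (stdAgent_eq_one _ _ (by simp [envies]; linarith)
        (by simp [envies, ha] <;> norm_num)) 3 (min'_3 _)
      {1,2} {0,3} ∅
      (by funext j; rcases fin2 j with rfl | rfl <;> simp <;> decide)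
      (by rintro ⟨e1, -⟩; simp [envies, ha] at e1 <;> linarith)
      (by decide)
    rw [Standard, s4]
    simp [vt] <;> norm_num
  · have s4 := round_noswap b 3 {1,2} {0} {3} s3 ⟨3, by decide⟩ 0
      (stdAgent_eq_zero _ _ (by simp [envies]; linarith [not_lt.1 hcc]))
      3 (min'_3 _) {1,2,3} {0} ∅
      (by funext j; rcases fin2 j with rfl | rfl <;> simp <;> decide)
      (by rintro ⟨e1, -⟩; simp [envies, ha] at e1 <;> linarith)
      (by decide)
    rw [Standard, s4]
    simp [vt] <;> norm_num

lemma simL0c (b : Fin 2 → Bid 4) (ha : (b 0).val = ![0, 9, 1, 9])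
    (h0 : 0 < (b 1).val 0) (h1 : (b 1).val 0 ≤ (b 1).val 1) :
    2 ≤ value vt (Standard b 0) := by
  have s2 := round_noswap b 1 {0} ∅ {1,2,3} (state1 b) ⟨1, by decide⟩ 1
    (stdAgent_eq_one _ _ (by simp [envies]; linarith) (by simp [envies, ha] <;> norm_num))
    1 (min'_123 _) {0} {1} {2,3}
    (by funext j; rcases fin2 j with rfl | rfl <;> simp <;> decide)
    (by rintro ⟨-, e2⟩; simp [envies] at e2; linarith)
    (by decide)
  by_cases hcc : (b 1).val 1 < (b 1).val 0 + (b 1).val 2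
  · have s3 := round_swap b 2 {0} {1} {2,3} s2 ⟨2, by decide⟩ 0
      (stdAgent_eq_zero _ _ (by simp [envies]; linarith)) 2 (min'_23 _)
      {0,2} {1} {3}
      (by funext j; rcases fin2 j with rfl | rfl <;> simp <;> decide)
      (by simp [envies, ha] <;> norm_num) (by simp [envies]; linarith)
      (by decide)
    have s4 := round_noswap b 3 {1} {0,2} {3} s3 ⟨3, by decide⟩ 0
      (stdAgent_eq_zero _ _ (by simp [envies]; linarith)) 3 (min'_3 _)
      {1,3} {0,2} ∅
      (by funext j; rcases fin2 j with rfl | rfl <;> simp <;> decide)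
      (by rintro ⟨e1, -⟩; simp [envies, ha] at e1 <;> linarith)
      (by decide)
    rw [Standard, s4]
    simp [vt] <;> norm_num
  · have s3 := round_noswap b 2 {0} {1} {2,3} s2 ⟨2, by decide⟩ 0
      (stdAgent_eq_zero _ _ (by simp [envies]; linarith)) 2 (min'_23 _)
      {0,2} {1} {3}
      (by funext j; rcases fin2 j with rfl | rfl <;> simp <;> decide)
      (by rintro ⟨-, e2⟩; simp [envies] at e2; exact hcc (by linarith))
      (by decide)
    have s4 := round_noswap b 3 {0,2} {1} {3} s3 ⟨3, by decide⟩ 0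
      (stdAgent_eq_zero _ _ (by simp [envies]; linarith [not_lt.1 hcc]))
      3 (min'_3 _) {0,2,3} {1} ∅
      (by funext j; rcases fin2 j with rfl | rfl <;> simp <;> decide)
      (by rintro ⟨e1, -⟩; simp [envies, ha] at e1 <;> linarith)
      (by decide)
    rw [Standard, s4]
    simp [vt] <;> norm_num

end ECE
namespace ECE

lemma elimOnce_perm (b : Fin 2 → Bid 4) (P : Fin 2 → Finset (Fin 4)) :
    ∃ σ : Equiv.Perm (Fin 2), elimOnce b P = fun i => P (σ i) := by
  rw [elimOnce]
  split
  · exact ⟨_, rfl⟩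
  · exact ⟨1, by funext i; simp⟩

lemma resolve_perm (b : Fin 2 → Bid 4) (fuel : ℕ) (P : Fin 2 → Finset (Fin 4)) :
    ∃ σ : Equiv.Perm (Fin 2), resolve b fuel P = fun i => P (σ i) := by
  induction fuel generalizing P with
  | zero => exact ⟨1, by funext i; simp [resolve]⟩
  | succ fuel ih =>
    rw [resolve]
    split
    · exact ⟨1, by funext i; simp⟩
    · obtain ⟨σ0, h0⟩ := elimOnce_perm b P
      obtain ⟨σ', h'⟩ := ih (elimOnce b P)
      refine ⟨σ'.trans σ0, ?_⟩
      rw [h', h0]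
      rfl

/-- The invariant of a Standard-E-C-E run: the two bundles are disjoint and
disjoint from the set of remaining goods. -/
def Inv (s : (Fin 2 → Finset (Fin 4)) × Finset (Fin 4)) : Prop :=
  (s.1 0 ∩ s.1 1 = ∅) ∧ ∀ g ∈ s.2, g ∉ s.1 0 ∧ g ∉ s.1 1

lemma inv_perm (P : Fin 2 → Finset (Fin 4)) (R : Finset (Fin 4))
    (σ : Equiv.Perm (Fin 2)) (h : Inv (P, R)) : Inv (fun i => P (σ i), R) := by
  obtain ⟨h1, h2⟩ := h
  rcases perm_fin2 σ with rfl | rfl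
  · simpa [Inv] using ⟨h1, h2⟩
  · refine ⟨?_, fun g hg => ?_⟩
    · simpa [Finset.inter_comm] using h1
    · simpa [And.comm] using h2 g hg

lemma inv_state (b : Fin 2 → Bid 4) (pA : (Fin 2 → Finset (Fin 4)) → Option (Fin 2))
    (k : ℕ) : Inv (stateECE b pA (fun _ R hR => R.min' hR) k) := by
  induction k with
  | zero =>
    constructor
    · simp [stateECE]
    · intro g _; simp [stateECE]
  | succ k ih =>
    rw [stateECE]
    set s := stateECE b pA (fun _ R hR => R.min' hR) k with hs
    by_cases hR : s.2.Nonempty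
    · rw [dif_pos hR]
      cases hA : pA s.1 with
      | none => exact ih
      | some i =>
        simp only
        set g := s.2.min' hR with hg
        have hgR : g ∈ s.2 := Finset.min'_mem _ _
        have hg0 : g ∉ s.1 0 := (ih.2 g hgR).1
        have hg1 : g ∉ s.1 1 := (ih.2 g hgR).2
        have hmid : Inv (fun j => if j = i then insert g (s.1 j) else s.1 j,
            s.2.erase g) := by
          have hInv := ih.1
          rw [Finset.eq_empty_iff_forall_notMem] at hInv
          constructor
          · rw [Finset.eq_empty_iff_forall_notMem]
            intro x hx
            simp only [Finset.mem_inter] at hx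
            obtain ⟨hx0, hx1⟩ := hx
            rcases fin2 i with rfl | rfl
            · rw [if_pos rfl] at hx0
              rw [if_neg (by decide : ¬ (1 : Fin 2) = 0)] at hx1
              rcases Finset.mem_insert.1 hx0 with rfl | hx0
              · exact hg1 hx1
              · exact hInv x (Finset.mem_inter.2 ⟨hx0, hx1⟩)
            · rw [if_neg (by decide : ¬ (0 : Fin 2) = 1)] at hx0
              rw [if_pos rfl] at hx1
              rcases Finset.mem_insert.1 hx1 with rfl | hx1
              · exact hg0 hx0
              · exact hInv x (Finset.mem_inter.2 ⟨hx0, hx1⟩)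
          · intro x hx
            have hxs : x ∈ s.2 := Finset.mem_of_mem_erase hx
            have hxg : x ≠ g := Finset.ne_of_mem_erase hx
            have h0 := (ih.2 x hxs).1
            have h1 := (ih.2 x hxs).2
            constructor
            · show x ∉ if (0 : Fin 2) = i then insert g (s.1 0) else s.1 0
              rcases fin2 i with rfl | rfl
              · rw [if_pos rfl]
                simp [Finset.mem_insert, hxg, h0]
              · rw [if_neg (by decide : ¬ (0 : Fin 2) = 1)]
                exact h0
            · show x ∉ if (1 : Fin 2) = i then insert g (s.1 1) else s.1 1
              rcases fin2 i with rfl | rfl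
              · rw [if_neg (by decide : ¬ (1 : Fin 2) = 0)]
                exact h1
              · rw [if_pos rfl]
                simp [Finset.mem_insert, hxg, h1]
        obtain ⟨σ, hσ⟩ := resolve_perm b (2 * 2 + 1)
          (fun j => if j = i then insert g (s.1 j) else s.1 j)
        rw [hσ]
        exact inv_perm _ _ σ hmid
    · rw [dif_neg hR]; exact ih

lemma standard_disjoint (b : Fin 2 → Bid 4) :
    Standard b 0 ∩ Standard b 1 = ∅ := by
  have h := (inv_state b (stdAgent b) 4).1
  rw [Standard]
  convert h using 3

lemma value_sum_le (b : Fin 2 → Bid 4) :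
    value vt (Standard b 0) + value vt (Standard b 1) ≤ 3 := by
  have hdisj : Disjoint (Standard b 0) (Standard b 1) :=
    Finset.disjoint_iff_inter_eq_empty.2 (standard_disjoint b)
  have h1 : value vt (Standard b 0) + value vt (Standard b 1)
      = value vt (Standard b 0 ∪ Standard b 1) :=
    (Finset.sum_union hdisj).symm
  rw [h1, value]
  calc ∑ g ∈ Standard b 0 ∪ Standard b 1, vt g
      ≤ ∑ g : Fin 4, vt g := Finset.sum_le_sum_of_subset_of_nonneg
        (Finset.subset_univ _) (by intro g _ _; by_cases h : g = 0 <;> simp [vt, h])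
    _ = 3 := by simp [Fin.sum_univ_four, vt]; norm_num

end ECE
namespace ECE

lemma L0 (b : Fin 2 → Bid 4) :
    ∃ b' : Bid 4, 2 ≤ value vt (Standard (Function.update b 0 b') 0) := by
  have hupd : ∀ b' : Bid 4, Function.update b 0 b' 1 = b 1 := fun b' =>
    Function.update_of_ne (by decide) _ _
  by_cases h0 : (b 1).val 0 ≤ 0
  · refine ⟨⟨![0,0,9,9], by intro g; fin_cases g <;> norm_num, 1⟩, ?_⟩
    exact simL0a _ (by rw [Function.update_self]) (by rw [hupd]; exact h0)
  · push_neg at h0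
    by_cases h1 : (b 1).val 1 < (b 1).val 0
    · refine ⟨⟨![0,1,1,0], by intro g; fin_cases g <;> norm_num, 1⟩, ?_⟩
      exact simL0b _ (by rw [Function.update_self]) (by rw [hupd]; exact h0)
        (by rw [hupd]; exact h1)
    · push_neg at h1
      refine ⟨⟨![0,9,1,9], by intro g; fin_cases g <;> norm_num, 1⟩, ?_⟩
      exact simL0c _ (by rw [Function.update_self]) (by rw [hupd]; exact h0)
        (by rw [hupd]; exact h1)

lemma L1 (b : Fin 2 → Bid 4) :
    ∃ b' : Bid 4, 2 ≤ value vt (Standard (Function.update b 1 b') 1) := by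
  have hupd : ∀ b' : Bid 4, Function.update b 1 b' 0 = b 0 := fun b' =>
    Function.update_of_ne (by decide) _ _
  by_cases h : (b 0).val 2 ≤ (b 0).val 0 + (b 0).val 1
  · refine ⟨⟨![0,1,0,9], by intro g; fin_cases g <;> norm_num, 1⟩, ?_⟩
    rw [simL1a _ (by rw [Function.update_self]) (by rw [hupd]; exact h)]
    simp [vt] <;> norm_num
  · push_neg at h
    refine ⟨⟨![1,1,9,9], by intro g; fin_cases g <;> norm_num, 1⟩, ?_⟩
    rw [simL1b _ (by rw [Function.update_self]) (by rw [hupd]; exact h)]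
    simp [vt] <;> norm_num

end ECE


/-- For the instance with exactly 2 agents and 4 goods in which both
agents have the identical binary additive true valuation `v` with `v g₁ = 0` and
`v g₂ = v g₃ = v g₄ = 1`, Standard-E-C-E has no pure Nash equilibrium: for every bid
profile there is an agent and an alternative bid that strictly improves her true
value. -/
theorem standard_two_binary_four_goods_no_PNE (b : Fin 2 → Bid 4) :
    ∃ (i : Fin 2) (b' : Bid 4),
      value (fun g : Fin 4 => if g = 0 then (0 : ℝ) else 1) (Standard b i) <
        value (fun g : Fin 4 => if g = 0 then (0 : ℝ) else 1)
          (Standard (Function.update b i b') i) := by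
  have hv : (fun g : Fin 4 => if g = 0 then (0 : ℝ) else 1) = vt := rfl
  rw [hv]
  by_cases h : value vt (Standard b 0) < 2
  · obtain ⟨b', hb'⟩ := L0 b
    exact ⟨0, b', lt_of_lt_of_le h hb'⟩
  · obtain ⟨b', hb'⟩ := L1 b
    refine ⟨1, b', lt_of_lt_of_le ?_ hb'⟩
    have := value_sum_le b
    linarith [not_lt.1 h]
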